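/- For the n-qubit pure product state of t T-states and n−t zero states, |ψ_t⟩ = |T⟩^{⊗t} ⊗ |0⟩^{⊗(n−t)} with 0 ≤ t ≤ n, the third Pauli spectrum moment equals A_3(|ψ_t⟩⟨ψ_t|) = (5/8)^t; equivalently −(1/2) ln A_3(|ψ_t⟩⟨ψ_t|) = (t/2) ln(8/5). -/

import Mathlib

open Matrix Complex BigOperators
open scoped ComplexOrder

noncomputable section

/-- Index type for `n` qubits: functions `Fin n → Fin 2` (cardinality `2^n`). -/
abbrev QIdx (n : ℕ) := Fin n → Fin 2

/-- The four single-qubit Pauli matrices: `σ⁰ = I`, `σ¹ = σˣ`, `σ² = σᶻ`, `σ³ = σʸ`. -/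
def pauliMat : Fin 4 → Matrix (Fin 2) (Fin 2) ℂ
  | 0 => 1
  | 1 => !![0, 1; 1, 0]
  | 2 => !![1, 0; 0, -1]
  | 3 => !![0, -Complex.I; Complex.I, 0]

/-- The Pauli string `σ^{a_1} ⊗ ⋯ ⊗ σ^{a_n}` as a `2^n × 2^n` matrix. -/
def pauliString {n : ℕ} (a : Fin n → Fin 4) : Matrix (QIdx n) (QIdx n) ℂ :=
  fun i j => ∏ k, pauliMat (a k) (i k) (j k)

/-- An `n`-qubit state: positive semidefinite with unit trace. -/
def IsState {n : ℕ} (ρ : Matrix (QIdx n) (QIdx n) ℂ) : Prop :=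
  ρ.PosSemidef ∧ ρ.trace = 1

/-- The `α`-moment of the Pauli spectrum `A_α(ρ) = 2^{-n} ∑_P |tr(ρP)|^{2α}`. -/
def Amom {n : ℕ} (α : ℝ) (ρ : Matrix (QIdx n) (QIdx n) ℂ) : ℝ :=
  ((2:ℝ)^n)⁻¹ * ∑ a : Fin n → Fin 4, (‖(ρ * pauliString a).trace‖) ^ (2 * α)

/-- The 2-Rényi entropy `S₂(ρ) = -ln tr(ρ²)`. -/
def S2 {n : ℕ} (ρ : Matrix (QIdx n) (QIdx n) ℂ) : ℝ :=
  - Real.log ((ρ * ρ).trace.re)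

/-- The magic witness `W_α(ρ) = (1/(1-α)) ln A_α(ρ) - ((1-2α)/(1-α)) S₂(ρ)`. -/
def Wit {n : ℕ} (α : ℝ) (ρ : Matrix (QIdx n) (QIdx n) ℂ) : ℝ :=
  (1 / (1 - α)) * Real.log (Amom α ρ) - ((1 - 2*α)/(1 - α)) * S2 ρ

/-- The stabilizer norm `D(ρ) = A_{1/2}(ρ) = 2^{-n} ∑_P |tr(ρP)|`. -/
def Dnorm {n : ℕ} (ρ : Matrix (QIdx n) (QIdx n) ℂ) : ℝ :=
  Amom (1/2) ρ

/-- A Clifford unitary: unitary mapping every Pauli string to `±` a Pauli string. -/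
def IsCliffordUnitary {n : ℕ} (U : Matrix (QIdx n) (QIdx n) ℂ) : Prop :=
  U ∈ Matrix.unitaryGroup (QIdx n) ℂ ∧
    ∀ a : Fin n → Fin 4, ∃ (b : Fin n → Fin 4) (ε : ℝ),
      (ε = 1 ∨ ε = -1) ∧ U * pauliString a * Uᴴ = (ε : ℂ) • pauliString b

/-- The computational all-zeros basis vector `|0⟩^{⊗n}`. -/
def zeroVec (n : ℕ) : QIdx n → ℂ :=
  fun i => if (∀ k, i k = 0) then 1 else 0

/-- A pure stabilizer state vector: `U|0⟩^{⊗n}` for a Clifford unitary `U`. -/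
def IsPureStab {n : ℕ} (ψ : QIdx n → ℂ) : Prop :=
  ∃ U, IsCliffordUnitary U ∧ ψ = U.mulVec (zeroVec n)

/-- The rank-one projector `|ψ⟩⟨ψ|`. -/
def proj {n : ℕ} (ψ : QIdx n → ℂ) : Matrix (QIdx n) (QIdx n) ℂ :=
  Matrix.vecMulVec ψ (star ψ)

/-- A mixed stabilizer state: a finite convex combination of pure stabilizer projectors. -/
def IsMixedStab {n : ℕ} (ρ : Matrix (QIdx n) (QIdx n) ℂ) : Prop :=
  ∃ (k : ℕ) (p : Fin k → ℝ) (ψ : Fin k → QIdx n → ℂ),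
    (∀ i, 0 ≤ p i) ∧ (∑ i, p i = 1) ∧ (∀ i, IsPureStab (ψ i)) ∧
    ρ = ∑ i, (p i : ℂ) • proj (ψ i)

/-- The set of values `ln ∑ᵢ |xᵢ|` over finite real stabilizer decompositions of `ρ`. -/
def StabDecomps {n : ℕ} (ρ : Matrix (QIdx n) (QIdx n) ℂ) : Set ℝ :=
  { r | ∃ (k : ℕ) (x : Fin k → ℝ) (ψ : Fin k → QIdx n → ℂ),
      (∀ i, IsPureStab (ψ i)) ∧ ρ = ∑ i, (x i : ℂ) • proj (ψ i) ∧
      r = Real.log (∑ i, |x i|) }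

/-- The log-free robustness of magic. -/
def LR {n : ℕ} (ρ : Matrix (QIdx n) (QIdx n) ℂ) : ℝ := sInf (StabDecomps ρ)

open Classical in
/-- Positive-semidefinite square root (junk value `0` off the PSD cone). -/
def psdSqrt {n : ℕ} (A : Matrix (QIdx n) (QIdx n) ℂ) : Matrix (QIdx n) (QIdx n) ℂ :=
  if h : A.PosSemidef then
    (h.1.eigenvectorUnitary : Matrix (QIdx n) (QIdx n) ℂ) *
      Matrix.diagonal (fun i => ((Real.sqrt (h.1.eigenvalues i) : ℝ) : ℂ)) *
      (star h.1.eigenvectorUnitary : Matrix (QIdx n) (QIdx n) ℂ)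
  else 0

/-- The Uhlmann fidelity `F(ρ,σ) = (tr √(√ρ σ √ρ))²`. -/
def fidelity {n : ℕ} (ρ σ : Matrix (QIdx n) (QIdx n) ℂ) : ℝ :=
  ((psdSqrt (psdSqrt ρ * σ * psdSqrt ρ)).trace.re) ^ 2

/-- The stabilizer fidelity `D_F(ρ) = inf { -ln F(ρ,σ) : σ a mixed stabilizer state }`. -/
def DF {n : ℕ} (ρ : Matrix (QIdx n) (QIdx n) ℂ) : ℝ :=
  sInf { r | ∃ σ, IsMixedStab σ ∧ r = - Real.log (fidelity ρ σ) }

/-- Filtered Pauli moment `Ã_α(ρ) = (2^n A_α(ρ) - 1)/(2^n - 1)`. -/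
def Atil {n : ℕ} (α : ℝ) (ρ : Matrix (QIdx n) (QIdx n) ℂ) : ℝ :=
  ((2:ℝ)^n * Amom α ρ - 1) / ((2:ℝ)^n - 1)

/-- Filtered stabilizer norm `D̃(ρ) = (2^n D(ρ) - 1)/(2^n - 1)`. -/
def Dtil {n : ℕ} (ρ : Matrix (QIdx n) (QIdx n) ℂ) : ℝ :=
  ((2:ℝ)^n * Dnorm ρ - 1) / ((2:ℝ)^n - 1)

/-- Filtered magic witness `W̃_α(ρ) = (1/(1-α)) ln Ã_α(ρ) + ((1-2α)/(1-α)) ln Ã₁(ρ)`. -/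
def Wtil {n : ℕ} (α : ℝ) (ρ : Matrix (QIdx n) (QIdx n) ℂ) : ℝ :=
  (1/(1-α)) * Real.log (Atil α ρ) + ((1 - 2*α)/(1-α)) * Real.log (Atil 1 ρ)

/-- The maximally mixed state `I/2^n`. -/
def maxMixed (n : ℕ) : Matrix (QIdx n) (QIdx n) ℂ := ((2:ℂ)^n)⁻¹ • 1

/-- The single-qubit T-state vector `|T⟩ = (|0⟩ + e^{-iπ/4}|1⟩)/√2`. -/
def Tket : QIdx 1 → ℂ :=
  fun i => if i 0 = 0 then (Real.sqrt 2 : ℂ)⁻¹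
           else Complex.exp (-(Real.pi/4 : ℂ) * Complex.I) * (Real.sqrt 2 : ℂ)⁻¹

/-- The depolarized T-state `ρ_p = (1-p)|T⟩⟨T| + p·I₂/2`. -/
def rhoDep (p : ℝ) : Matrix (QIdx 1) (QIdx 1) ℂ :=
  ((1 - p : ℝ) : ℂ) • proj Tket + ((p : ℝ) : ℂ) • (((2:ℂ))⁻¹ • 1)


/-- The product state vector `|ψ_t⟩ = |T⟩^{⊗t} ⊗ |0⟩^{⊗(n-t)}` on `n` qubits. -/
def psiTprod (n t : ℕ) : QIdx n → ℂ :=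
  fun i => ∏ k : Fin n,
    if (k : ℕ) < t then
      (if i k = 0 then (Real.sqrt 2 : ℂ)⁻¹
       else Complex.exp (-(Real.pi/4 : ℂ) * Complex.I) * (Real.sqrt 2 : ℂ)⁻¹)
    else (if i k = 0 then 1 else 0)

-- auxiliary development
lemma pm0 : pauliMat 0 = 1 := rfl
lemma pm1 : pauliMat 1 = !![0, 1; 1, 0] := rfl
lemma pm2 : pauliMat 2 = !![1, 0; 0, -1] := rfl
lemma pm3 : pauliMat 3 = !![0, -Complex.I; Complex.I, 0] := rfl

def ampF (t : ℕ) {n : ℕ} (k : Fin n) : Fin 2 → ℂ := fun x =>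
  if (k : ℕ) < t then
    (if x = 0 then (Real.sqrt 2 : ℂ)⁻¹
     else Complex.exp (-(Real.pi/4 : ℂ) * Complex.I) * (Real.sqrt 2 : ℂ)⁻¹)
  else (if x = 0 then 1 else 0)

lemma psiTprod_eq (n t : ℕ) (i : QIdx n) : psiTprod n t i = ∏ k, ampF t k (i k) := rfl

def qval (g : Fin 2 → ℂ) (b : Fin 4) : ℂ :=
  ∑ p : Fin 2 × Fin 2, g p.1 * (starRingEnd ℂ) (g p.2) * pauliMat b p.2 p.1

lemma trace_factor {n t : ℕ} (a : Fin n → Fin 4) :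
    (proj (psiTprod n t) * pauliString a).trace = ∏ k, qval (ampF t k) (a k) := by
  have h1 : (proj (psiTprod n t) * pauliString a).trace
      = ∑ i : QIdx n, ∑ j : QIdx n,
          ∏ k, (ampF t k (i k) * (starRingEnd ℂ) (ampF t k (j k)) * pauliMat (a k) (j k) (i k)) := by
    simp only [Matrix.trace, Matrix.diag, Matrix.mul_apply, proj, Matrix.vecMulVec_apply,
      Pi.star_apply, pauliString, psiTprod_eq]
    refine Finset.sum_congr rfl fun i _ => Finset.sum_congr rfl fun j _ => ?_
    rw [Finset.prod_mul_distrib, Finset.prod_mul_distrib]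
    simp only [starRingEnd_apply, star_prod]
    try ring
  rw [h1]
  have h2 : ∏ k, qval (ampF t k) (a k)
      = ∑ q : Fin n → Fin 2 × Fin 2,
          ∏ k, (ampF t k ((q k).1) * (starRingEnd ℂ) (ampF t k ((q k).2)) * pauliMat (a k) ((q k).2) ((q k).1)) :=
    Fintype.prod_sum _
  rw [h2, ← Equiv.sum_comp (Equiv.arrowProdEquivProdArrow (Fin n) (fun _ => Fin 2) (fun _ => Fin 2)).symm,
    Fintype.sum_prod_type]
  rfl

def Eu : ℂ := Complex.exp (-(Real.pi/4 : ℂ) * Complex.I)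

lemma e_val : Eu = ((Real.sqrt 2 : ℂ)/2) * (1 - Complex.I) := by
  have h : -(Real.pi/4 : ℂ) = ((-(Real.pi/4) : ℝ) : ℂ) := by push_cast; ring
  rw [Eu, h, Complex.exp_mul_I, ← Complex.ofReal_cos, ← Complex.ofReal_sin,
      Real.cos_neg, Real.sin_neg, Real.cos_pi_div_four, Real.sin_pi_div_four]
  push_cast; ring

lemma conj_e : (starRingEnd ℂ) Eu = ((Real.sqrt 2 : ℂ)/2) * (1 + Complex.I) := by
  rw [e_val]
  simp only [_root_.map_mul, map_sub, map_div₀, _root_.map_one, Complex.conj_ofReal,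
    Complex.conj_I, map_ofNat]
  ring

lemma hr2 : (Real.sqrt 2 : ℂ) * (Real.sqrt 2 : ℂ) = 2 := by
  rw [← Complex.ofReal_mul, Real.mul_self_sqrt (by norm_num)]; norm_num

lemma hE1 : Eu * (starRingEnd ℂ) Eu = 1 := by
  rw [conj_e, e_val]
  linear_combination (-((Real.sqrt 2 : ℂ) * (Real.sqrt 2 : ℂ))/4) * Complex.I_sq + hr2/2

lemma hE2 : Eu + (starRingEnd ℂ) Eu = (Real.sqrt 2 : ℂ) := by
  rw [conj_e, e_val]; ring

lemma hE3 : Eu - (starRingEnd ℂ) Eu = -(Real.sqrt 2 : ℂ) * Complex.I := by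
  rw [conj_e, e_val]; ring

lemma sum0 {n t : ℕ} (k : Fin n) (hk : ¬ ((k:ℕ) < t)) :
    ∑ b : Fin 4, ‖qval (ampF t k) b‖^(6:ℕ) = 2 := by
  have hg : ampF t k = fun x => if x = 0 then 1 else 0 := by
    funext x; simp only [ampF, if_neg hk]
  rw [hg, Fin.sum_univ_four]
  simp [qval, Fintype.sum_prod_type, Fin.sum_univ_two, pm0, pm1, pm2, pm3, Matrix.one_apply]
  norm_num

lemma sumT {n t : ℕ} (k : Fin n) (hk : (k:ℕ) < t) :
    ∑ b : Fin 4, ‖qval (ampF t k) b‖^(6:ℕ) = 5/4 := by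
  have hg : ampF t k = fun x => if x = 0 then (Real.sqrt 2 : ℂ)⁻¹ else Eu * (Real.sqrt 2 : ℂ)⁻¹ := by
    funext x; simp only [ampF, if_pos hk, Eu]
  have hrne : (Real.sqrt 2 : ℂ) ≠ 0 := by
    intro h
    have h2 := hr2
    rw [h] at h2
    norm_num at h2
  have habs : ‖(Real.sqrt 2 : ℂ)/2‖ = Real.sqrt 2 / 2 := by
    rw [show ((Real.sqrt 2 : ℂ)/2) = ((Real.sqrt 2 / 2 : ℝ) : ℂ) by push_cast; ring,
      Complex.norm_real, Real.norm_eq_abs, _root_.abs_of_nonneg (by positivity)]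
  have h8 : (Real.sqrt 2)^(6:ℕ) = 8 := by
    have h : (Real.sqrt 2)^(6:ℕ) = ((Real.sqrt 2)^2)^3 := by ring
    rw [h, Real.sq_sqrt (by norm_num)]; norm_num
  have hpow : (Real.sqrt 2 / 2)^(6:ℕ) = 1/8 := by
    rw [div_pow, h8]; norm_num
  have q0 : qval (ampF t k) 0 = 1 := by
    rw [hg]
    simp only [qval, Fintype.sum_prod_type, Fin.sum_univ_two, pm0, Matrix.one_apply,
      _root_.map_mul, map_inv₀, Complex.conj_ofReal]
    norm_num
    field_simp
    linear_combination hE1 - hr2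
  have q1 : qval (ampF t k) 1 = (Real.sqrt 2 : ℂ)/2 := by
    rw [hg]
    simp only [qval, Fintype.sum_prod_type, Fin.sum_univ_two, pm1,
      _root_.map_mul, map_inv₀, Complex.conj_ofReal]
    norm_num
    field_simp
    linear_combination (2 - (Real.sqrt 2:ℂ)*(Real.sqrt 2:ℂ)/2 + (Real.sqrt 2:ℂ)*(Real.sqrt 2:ℂ) - 1) * hE2 - (Real.sqrt 2:ℂ) * hr2 + (-1 + (Real.sqrt 2:ℂ) + (Real.sqrt 2:ℂ)*(Real.sqrt 2:ℂ)/2) * hE2 + (2 - (Real.sqrt 2:ℂ) - (Real.sqrt 2:ℂ)*(Real.sqrt 2:ℂ)) * hE2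
  have q2 : qval (ampF t k) 2 = 0 := by
    rw [hg]
    simp only [qval, Fintype.sum_prod_type, Fin.sum_univ_two, pm2,
      _root_.map_mul, map_inv₀, Complex.conj_ofReal]
    norm_num
    field_simp
    linear_combination -hE1
  have q3 : qval (ampF t k) 3 = -((Real.sqrt 2 : ℂ)/2) := by
    rw [hg]
    simp only [qval, Fintype.sum_prod_type, Fin.sum_univ_two, pm3,
      _root_.map_mul, map_inv₀, Complex.conj_ofReal]
    norm_num
    field_simp
    linear_combination 2*(Real.sqrt 2:ℂ)*hr2 - 2*Complex.I*hE3 + 2*(Real.sqrt 2:ℂ)*Complex.I_sq + (Real.sqrt 2:ℂ)*hr2 - 2*(Real.sqrt 2:ℂ)*hr2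
  rw [Fin.sum_univ_four, q0, q1, q2, q3, norm_neg, habs]
  simp [hpow]
  norm_num

lemma amom_eval (n t : ℕ) (ht : t ≤ n) : Amom 3 (proj (psiTprod n t)) = (5/8 : ℝ)^t := by
  have hstep : ∀ a : Fin n → Fin 4,
      ‖(proj (psiTprod n t) * pauliString a).trace‖ ^ (2*(3:ℝ))
        = ∏ k, ‖qval (ampF t k) (a k)‖^(6:ℕ) := by
    intro a
    rw [show (2*(3:ℝ)) = ((6:ℕ):ℝ) by norm_num, Real.rpow_natCast, trace_factor, norm_prod,
      ← Finset.prod_pow]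
  have hsum : ∑ a : Fin n → Fin 4,
      ‖(proj (psiTprod n t) * pauliString a).trace‖ ^ (2*(3:ℝ))
        = ∏ k : Fin n, (if (k:ℕ) < t then (5/4:ℝ) else 2) := by
    have hfub := Fintype.prod_sum (ι := Fin n) (κ := fun _ => Fin 4) (R := ℝ)
      (fun k b => ‖qval (ampF t k) b‖^(6:ℕ))
    rw [Finset.sum_congr rfl (fun a _ => hstep a), ← hfub]
    refine Finset.prod_congr rfl fun k _ => ?_
    by_cases hk : (k:ℕ) < t
    · rw [sumT k hk, if_pos hk]
    · rw [sum0 k hk, if_neg hk]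
  have hprod : ∏ k : Fin n, (if (k:ℕ) < t then (5/4:ℝ) else 2)
      = (5/4:ℝ)^t * 2^(n-t) := by
    rw [Fin.prod_univ_eq_prod_range (fun m => if m < t then (5/4:ℝ) else 2) n,
      ← Finset.prod_range_mul_prod_Ico _ ht]
    congr 1
    · rw [Finset.prod_congr rfl (fun i hi => if_pos (Finset.mem_range.mp hi)),
        Finset.prod_const, Finset.card_range]
    · rw [Finset.prod_congr rfl (fun i hi => if_neg (by
        have := (Finset.mem_Ico.mp hi).1; omega)),
        Finset.prod_const, Nat.card_Ico]
  have h2n : (2:ℝ)^n = 2^t * 2^(n-t) := by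
    rw [← pow_add, Nat.add_sub_cancel' ht]
  have hkey : (5/8:ℝ)^t * 2^t = (5/4:ℝ)^t := by
    rw [← mul_pow]; norm_num
  rw [Amom, hsum, hprod, h2n, inv_mul_eq_div, div_eq_iff (by positivity)]
  rw [← hkey]; ring

/-- `A₃(|ψ_t⟩⟨ψ_t|) = (5/8)^t`, equivalently
`-(1/2) ln A₃(|ψ_t⟩⟨ψ_t|) = (t/2) ln(8/5)`. -/
theorem A3_T_product (n t : ℕ) (ht : t ≤ n) :
    Amom 3 (proj (psiTprod n t)) = (5/8 : ℝ)^t ∧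
    -(1/2 : ℝ) * Real.log (Amom 3 (proj (psiTprod n t))) =
      ((t : ℝ)/2) * Real.log (8/5) := by
  have h := amom_eval n t ht
  refine ⟨h, ?_⟩
  rw [h, Real.log_pow, show ((8:ℝ)/5) = ((5:ℝ)/8)⁻¹ by norm_num, Real.log_inv]
  ring

end
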